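/- With the same setup (partition Σ = Σ₀ ∪ Σ₁, bitvector B, subsequences S₀, S₁), for every c ∈ Σ₀ and every k, select_c(S, k) = select₀(B, select_c(S₀, k)), where select_c(X, k) is the position of the k-th occurrence of c in X (when it exists). -/

import Mathlib

/-- The position of the `k`-th occurrence (among the symbols satisfying `p`)
in the list `l`: the least `i` such that the first `i` positions of `l` contain
exactly `k` symbols satisfying `p`. -/
noncomputable def listSelect {A : Type*} (l : List A) (p : A → Bool) (k : ℕ) : ℕ :=
  sInf {i | (l.take i).countP p = k}

private lemma myMono {A : Type*} (l : List A) (p : A → Bool) {i j : ℕ} (h : i ≤ j) :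
    (l.take i).countP p ≤ (l.take j).countP p := by
  have : (l.take j).take i = l.take i := by rw [List.take_take, min_eq_left h]
  rw [← this]
  exact ((l.take j).take_sublist i).countP_le

private lemma myExists {A : Type*} (p : A → Bool) :
    ∀ (l : List A) (k : ℕ), k ≤ l.countP p → ∃ i ≤ l.length, (l.take i).countP p = k := by
  intro l
  induction l with
  | nil => intro k hk; simp at hk; exact ⟨0, by simp, by simp [hk]⟩
  | cons a t ih =>
    intro k hk
    rcases Nat.eq_zero_or_pos k with rfl | hkpos
    · exact ⟨0, by simp, by simp⟩
    · by_cases hpa : p a = true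
      · obtain ⟨i, hi, hci⟩ := ih (k-1) (by rw [List.countP_cons_of_pos hpa] at hk; omega)
        refine ⟨i+1, by simpa using hi, ?_⟩
        rw [List.take_succ_cons, List.countP_cons_of_pos hpa, hci]
        omega
      · obtain ⟨i, hi, hci⟩ := ih k (by rwa [List.countP_cons_of_neg hpa] at hk)
        exact ⟨i+1, by simpa using hi,
          by rw [List.take_succ_cons, List.countP_cons_of_neg hpa, hci]⟩

private lemma myFilterTake {A : Type*} (l : List A) (q : A → Bool) (i : ℕ) :
    (l.filter q).take ((l.take i).countP q) = (l.take i).filter q := by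
  have h : l.filter q = (l.take i).filter q ++ (l.drop i).filter q := by
    rw [← List.filter_append, List.take_append_drop]
  rw [h]
  exact List.take_left' List.countP_eq_length_filter.symm

private lemma myInfEq {s : Set ℕ} {n : ℕ} (hn : n ∈ s) (h : ∀ m < n, m ∉ s) : sInf s = n := by
  refine le_antisymm (Nat.sInf_le hn) ?_
  by_contra h'
  push_neg at h'
  exact h _ h' (Nat.sInf_mem ⟨n, hn⟩)

/-- wavelet tree select identity. With `Σ₀, Σ₁` (Sig0, Sig1) partitioning the
alphabet, `S₀` the subsequence of `S` of symbols in `Σ₀`, and `B[i] = 0` iff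
`S[i] ∈ Σ₀` (so `select₀(B, j)` is the position of the `j`-th position of `S`
carrying a symbol of `Σ₀`), for every `c ∈ Σ₀` and every valid `k`,
`select_c(S, k) = select₀(B, select_c(S₀, k))`. -/
theorem wavelet_tree_select
    {A : Type*} [DecidableEq A]
    (Sig0 Sig1 : Set A) [DecidablePred (· ∈ Sig0)]
    (hcover : Sig0 ∪ Sig1 = Set.univ) (hdisj : Disjoint Sig0 Sig1)
    (h0 : Sig0.Nonempty) (h1 : Sig1.Nonempty)
    (S : List A) (c : A) (hc : c ∈ Sig0)
    (k : ℕ) (hk1 : 1 ≤ k) (hk2 : k ≤ S.count c) :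
    listSelect S (fun x => decide (x = c)) k
      = listSelect S (fun x => decide (x ∈ Sig0))
          (listSelect (S.filter (fun x => decide (x ∈ Sig0)))
            (fun x => decide (x = c)) k) := by

  unfold listSelect
  set p : A → Bool := fun x => decide (x = c) with hp
  set q : A → Bool := fun x => decide (x ∈ Sig0) with hq
  have hpq : ∀ x, p x = true → q x = true := by
    intro x hx
    simp only [hp, decide_eq_true_eq] at hx
    simp [hq, hx, hc]
  have hcount : S.countP p = S.count c := by
    simp [List.count, hp]; rfl
  have hkS : k ≤ S.countP p := by omega
  have key : ∀ i, ((S.filter q).take ((S.take i).countP q)).countP p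
      = (S.take i).countP p := by
    intro i
    rw [myFilterTake, List.countP_filter]
    apply List.countP_congr
    intro a _
    by_cases hpa : p a = true
    · simp [hpa, hpq a hpa]
    · simp [hpa]
  obtain ⟨iw, hiw, hciw⟩ := myExists p S k hkS
  have hTne : {i | (S.take i).countP p = k}.Nonempty := ⟨iw, hciw⟩
  have hmem : (S.take (sInf {i | (S.take i).countP p = k})).countP p = k :=
    Nat.sInf_mem hTne
  have hlow : ∀ i < sInf {i | (S.take i).countP p = k}, (S.take i).countP p ≠ k :=
    fun i hi => Nat.notMem_of_lt_sInf (s := {i | (S.take i).countP p = k}) hi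
  obtain ⟨istar, histar⟩ : ∃ i, sInf {i | (S.take i).countP p = k} = i := ⟨_, rfl⟩
  rw [histar] at hmem hlow ⊢
  have hile : istar ≤ iw := histar ▸ Nat.sInf_le hciw
  have hipos : 1 ≤ istar := by
    rcases Nat.eq_zero_or_pos istar with h | h
    · rw [h] at hmem; simp at hmem; omega
    · exact h
  obtain ⟨m, hm⟩ : ∃ m, istar = m + 1 := ⟨istar - 1, by omega⟩
  have hmlt : m < S.length := by omega
  have htakes : S.take (m+1) = S.take m ++ [S[m]] := by
    rw [List.take_succ, List.getElem?_eq_getElem hmlt]; rfl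
  have hnotm : (S.take m).countP p ≠ k := hlow m (by omega)
  have hcnt1 : (S.take (m+1)).countP p
      = (S.take m).countP p + (if p S[m] = true then 1 else 0) := by
    rw [htakes, List.countP_append]
    by_cases h : p S[m] = true <;> simp [h, List.countP_cons]
  have hmemm : (S.take (m+1)).countP p = k := by rw [← hm]; exact hmem
  have hpSm : p S[m] = true := by
    by_contra h
    simp [h] at hcnt1
    omega
  have hprev : (S.take m).countP p = k - 1 := by
    rw [hpSm] at hcnt1; simp at hcnt1; omega
  have hqSm : q S[m] = true := hpq _ hpSm
  have hf : (S.take (m+1)).countP q = (S.take m).countP q + 1 := by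
    rw [htakes, List.countP_append]
    simp [hqSm, List.countP_cons]
  -- jstar
  have hj : sInf {j | ((S.filter q).take j).countP p = k} = (S.take istar).countP q := by
    apply myInfEq
    · show ((S.filter q).take ((S.take istar).countP q)).countP p = k
      rw [key istar, hmem]
    · intro j hj
      have hle : j ≤ (S.take m).countP q := by rw [hm, hf] at hj; omega
      have h2 : ((S.filter q).take j).countP p
          ≤ ((S.filter q).take ((S.take m).countP q)).countP p := myMono _ _ hle
      rw [key m, hprev] at h2
      intro hmem'
      simp only [Set.mem_setOf_eq] at hmem'
      omega
  rw [hj]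
  symm
  apply myInfEq
  · exact rfl
  · intro i hi hmem'
    simp only [Set.mem_setOf_eq] at hmem'
    have h2 : (S.take i).countP q ≤ (S.take m).countP q := myMono _ _ (by omega)
    have h3 : (S.take m).countP q < (S.take istar).countP q := by rw [hm, hf]; omega
    omega
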